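/- In the canonical game, for every play (δ,ω) ∈ P and every formula with ¬Nφ ∈ ω, there exists a play (δ',ω') ∈ P such that ¬φ ∈ ω'. -/

import Mathlib

/-- Formulas of the logic of blameworthiness with sacrifice over agent type `A`:
propositional variables, negation, implication, the universal modality `N`,
and the blameworthiness modality `B s C φ` ("coalition `C` is blameable for `φ`
with degree (sacrifice) `s`"). -/
inductive Formula (A : Type) : Type where
  | var : ℕ → Formula A
  | neg : Formula A → Formula A
  | impl : Formula A → Formula A → Formula A
  | N : Formula A → Formula A
  | B : ℝ → Finset A → Formula A → Formula A

namespace Formula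

/-- Disjunction, defined as usual. -/
def or {A : Type} (φ ψ : Formula A) : Formula A := (φ.neg).impl ψ

/-- Conjunction, defined as usual. -/
def and {A : Type} (φ ψ : Formula A) : Formula A := (φ.impl ψ.neg).neg

/-- The modality `N̄ φ := ¬ N ¬ φ` ("φ holds at some play"). -/
def nbar {A : Type} (φ : Formula A) : Formula A := (Formula.N φ.neg).neg

/-- A contradictory formula (used as the empty disjunction). -/
def fbot {A : Type} : Formula A := ((Formula.var 0).impl (Formula.var 0)).neg

end Formula

/-- Finite disjunction `χ₁ ∨ ⋯ ∨ χₙ` of a list of formulas. -/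
def bigOr {A : Type} : List (Formula A) → Formula A
  | [] => Formula.fbot
  | φ :: l => l.foldl Formula.or φ

/-- A game `(Δ, ‖·‖, d₀, Ω, P, π)`: a nonempty set of actions `Δ` with
nonnegative costs and a zero-cost action `d₀`, a set of outcomes `Ω`,
a set of plays `P` (pairs of a complete action profile and an outcome),
and a valuation `π` of propositional variables by sets of plays. -/
structure Game (A : Type) where
  Δ : Type
  Ω : Type
  cost : Δ → ℝ
  cost_nonneg : ∀ d : Δ, 0 ≤ cost d
  d0 : Δ
  cost_d0 : cost d0 = 0
  P : Set ((A → Δ) × Ω)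
  π : ℕ → Set ((A → Δ) × Ω)

/-- Satisfaction relation `(δ,ω) ⊨ φ`.  In particular
`(δ,ω) ⊨ B s C φ` iff `(δ,ω) ⊨ φ` and there is an action profile `γ` of the
coalition `C` of total cost `∑ a ∈ C, ‖γ(a)‖ ≤ s` such that every play
agreeing with `γ` on `C` falsifies `φ`. -/
def Sat {A : Type} (G : Game A) : ((A → G.Δ) × G.Ω) → Formula A → Prop
  | p, .var n => p ∈ G.π n
  | p, .neg φ => ¬ Sat G p φ
  | p, .impl φ ψ => Sat G p φ → Sat G p ψ
  | _, .N φ => ∀ q ∈ G.P, Sat G q φ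
  | p, .B s C φ => Sat G p φ ∧ ∃ γ : A → G.Δ,
      (∑ a ∈ C, G.cost (γ a)) ≤ s ∧
      ∀ q ∈ G.P, (∀ a ∈ C, q.1 a = γ a) → ¬ Sat G q φ

/-- A formula is a propositional tautology if it evaluates to true under every
Boolean valuation of formulas that respects negation and implication. -/
def Tautology {A : Type} (φ : Formula A) : Prop :=
  ∀ v : Formula A → Bool,
    (∀ ψ : Formula A, v ψ.neg = !(v ψ)) →
    (∀ ψ χ : Formula A, v (ψ.impl χ) = (!(v ψ) || v χ)) →
    v φ = true

/-- Theorems of the logic of blameworthiness with sacrifice: propositional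
tautologies, the Truth, Distributivity, Negative Introspection, None to Blame,
Monotonicity, Joint Responsibility, Blame for Cause, and Fairness axioms,
closed under Modus Ponens and Necessitation. -/
inductive Prov {A : Type} [DecidableEq A] : Formula A → Prop
  | taut {φ : Formula A} : Tautology φ → Prov φ
  | truthN {φ : Formula A} : Prov ((Formula.N φ).impl φ)
  | truthB {s : ℝ} {C : Finset A} {φ : Formula A} (hs : 0 ≤ s) :
      Prov ((Formula.B s C φ).impl φ)
  | distr {φ ψ : Formula A} :
      Prov ((Formula.N (φ.impl ψ)).impl ((Formula.N φ).impl (Formula.N ψ)))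
  | negIntro {φ : Formula A} :
      Prov (((Formula.N φ).neg).impl (Formula.N ((Formula.N φ).neg)))
  | noneToBlame {s : ℝ} {φ : Formula A} (hs : 0 ≤ s) :
      Prov ((Formula.B s (∅ : Finset A) φ).neg)
  | mono {s t : ℝ} {C D : Finset A} {φ : Formula A}
      (hs : 0 ≤ s) (hst : s ≤ t) (hCD : C ⊆ D) :
      Prov ((Formula.B s C φ).impl (Formula.B t D φ))
  | joint {s t : ℝ} {C D : Finset A} {φ ψ : Formula A}
      (hs : 0 ≤ s) (ht : 0 ≤ t) (hCD : Disjoint C D) :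
      Prov (((Formula.B s C φ).nbar.and (Formula.B t D ψ).nbar).impl
        ((φ.or ψ).impl (Formula.B (s + t) (C ∪ D) (φ.or ψ))))
  | cause {s : ℝ} {C : Finset A} {φ ψ : Formula A} (hs : 0 ≤ s) :
      Prov ((Formula.N (φ.impl ψ)).impl
        ((Formula.B s C ψ).impl (φ.impl (Formula.B s C φ))))
  | fair {s : ℝ} {C : Finset A} {φ : Formula A} (hs : 0 ≤ s) :
      Prov ((Formula.B s C φ).impl (Formula.N (φ.impl (Formula.B s C φ))))
  | mp {φ ψ : Formula A} : Prov (φ.impl ψ) → Prov φ → Prov ψ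
  | nec {φ : Formula A} : Prov φ → Prov (Formula.N φ)

/-- Derivability `X ⊢ φ` from a set of hypotheses: hypotheses and theorems of
the logic, closed under Modus Ponens. -/
inductive Derives {A : Type} [DecidableEq A] (X : Set (Formula A)) : Formula A → Prop
  | hyp {φ : Formula A} : φ ∈ X → Derives X φ
  | thm {φ : Formula A} : Prov φ → Derives X φ
  | mp {φ ψ : Formula A} : Derives X (φ.impl ψ) → Derives X φ → Derives X ψ

/-- A set of formulas is consistent if it cannot derive both a formula and its
negation. -/
def Consistent {A : Type} [DecidableEq A] (X : Set (Formula A)) : Prop :=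
  ∀ φ : Formula A, ¬ (Derives X φ ∧ Derives X φ.neg)

/-- Maximal consistent sets of formulas. -/
def MCS {A : Type} [DecidableEq A] (X : Set (Formula A)) : Prop :=
  Consistent X ∧ ∀ φ : Formula A, φ ∈ X ∨ φ.neg ∈ X

/-- Actions of the canonical game: the zero-cost action `d₀` (`none`) together
with all triples `(φ, C, s)` where `C` is a nonempty coalition and `s ≥ 0`. -/
def CanAct (A : Type) : Type :=
  Option {x : Formula A × Finset A × ℝ // x.2.1.Nonempty ∧ 0 ≤ x.2.2}

/-- Outcomes of the canonical game for `ω₀`: maximal consistent sets `ω` such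
that `ψ ∈ ω` whenever `N ψ ∈ ω₀`. -/
def CanOutcome {A : Type} [DecidableEq A] (ω₀ : Set (Formula A)) : Type :=
  {ω : Set (Formula A) // MCS ω ∧ ∀ φ : Formula A, Formula.N φ ∈ ω₀ → φ ∈ ω}

/-- Plays of the canonical game for `ω₀`: pairs `(δ, ω)` such that for every
formula `¬N¬B^s_C ψ ∈ ω₀`, if every member of `C` votes `(ψ, C, s)`, then
`¬ψ ∈ ω`. -/
def canonicalP {A : Type} [DecidableEq A] (ω₀ : Set (Formula A)) :
    Set ((A → CanAct A) × CanOutcome ω₀) :=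
  {p | ∀ (ψ : Formula A) (C : Finset A) (s : ℝ) (h : C.Nonempty ∧ 0 ≤ s),
        (Formula.B s C ψ).nbar ∈ ω₀ →
        (∀ a ∈ C, p.1 a = some ⟨(ψ, C, s), h⟩) → ψ.neg ∈ p.2.1}

/-- The canonical game `G(ω₀)` for a maximal consistent set `ω₀`.  The cost of
`d₀` is `0` and the cost of a triple `(φ, C, s)` is `s / |C|`. -/
noncomputable def canonicalGame {A : Type} [DecidableEq A] (ω₀ : Set (Formula A)) : Game A where
  Δ := CanAct A
  Ω := CanOutcome ω₀
  cost := fun d => match d with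
    | none => 0
    | some x => x.1.2.2 / x.1.2.1.card
  cost_nonneg := by
    rintro (_ | x)
    · exact le_refl 0
    · exact div_nonneg x.2.2 (Nat.cast_nonneg _)
  d0 := none
  cost_d0 := rfl
  P := canonicalP ω₀
  π := fun n => {p ∈ canonicalP ω₀ | Formula.var n ∈ p.2.1}

section Aux

variable {A : Type} [DecidableEq A]

/-- Tautology helper: any boolean identity. -/
private lemma taut_id (φ : Formula A) : Tautology (φ.impl φ) := by
  intro v hn hi; simp [hi]

private lemma taut_K (φ ψ : Formula A) : Tautology (ψ.impl (φ.impl ψ)) := by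
  intro v hn hi; simp only [hi]; cases v φ <;> cases v ψ <;> simp

private lemma taut_S (φ ψ χ : Formula A) :
    Tautology ((φ.impl (ψ.impl χ)).impl ((φ.impl ψ).impl (φ.impl χ))) := by
  intro v hn hi; simp only [hi]; cases v φ <;> cases v ψ <;> cases v χ <;> simp

private lemma taut_contra (φ ψ : Formula A) :
    Tautology ((φ.impl ψ).impl (ψ.neg.impl φ.neg)) := by
  intro v hn hi; simp only [hi, hn]; cases v φ <;> cases v ψ <;> simp

private lemma taut_dne (φ : Formula A) : Tautology (φ.neg.neg.impl φ) := by
  intro v hn hi; simp only [hi, hn]; cases v φ <;> simp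

private lemma taut_dni (φ : Formula A) : Tautology (φ.impl φ.neg.neg) := by
  intro v hn hi; simp only [hi, hn]; cases v φ <;> simp

private lemma taut_negI (φ ψ : Formula A) :
    Tautology ((φ.impl ψ).impl ((φ.impl ψ.neg).impl φ.neg)) := by
  intro v hn hi; simp only [hi, hn]; cases v φ <;> cases v ψ <;> simp

/-- Transitivity of provable implication. -/
private lemma prov_trans {φ ψ χ : Formula A}
    (h1 : Prov (φ.impl ψ)) (h2 : Prov (ψ.impl χ)) : Prov (φ.impl χ) := by
  have t : Tautology ((φ.impl ψ).impl ((ψ.impl χ).impl (φ.impl χ))) := by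
    intro v hn hi; simp only [hi]; cases v φ <;> cases v ψ <;> cases v χ <;> simp
  exact ((Prov.taut t).mp h1).mp h2

private lemma prov_contra {φ ψ : Formula A} (h : Prov (φ.impl ψ)) :
    Prov (ψ.neg.impl φ.neg) :=
  (Prov.taut (taut_contra φ ψ)).mp h

/-- Positive introspection, derived from Negative Introspection and Truth. -/
private lemma prov_posIntro (φ : Formula A) :
    Prov ((Formula.N φ).impl (Formula.N (Formula.N φ))) := by
  set a : Formula A := Formula.N φ with ha
  -- h2 : a → ¬N¬a
  have h2 : Prov (a.impl (Formula.N a.neg).neg) :=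
    prov_trans (Prov.taut (taut_dni a)) (prov_contra Prov.truthN)
  -- h5 : ¬N¬a → N ¬N¬a   (negative introspection at ¬a)
  have h5 : Prov ((Formula.N a.neg).neg.impl (Formula.N ((Formula.N a.neg).neg))) :=
    Prov.negIntro
  -- h4 : ¬N¬a → a   (contrapose negIntro at φ, then dne)
  have h4 : Prov ((Formula.N a.neg).neg.impl a) := by
    have := prov_contra (@Prov.negIntro A _ φ)
    exact prov_trans this (Prov.taut (taut_dne a))
  -- N(¬N¬a → a), distribute
  have h6 : Prov ((Formula.N ((Formula.N a.neg).neg)).impl (Formula.N a)) :=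
    Prov.distr.mp (Prov.nec h4)
  exact prov_trans h2 (prov_trans h5 h6)

private lemma Derives.mono {X Y : Set (Formula A)} {φ : Formula A}
    (hXY : X ⊆ Y) (h : Derives X φ) : Derives Y φ := by
  induction h with
  | hyp h => exact Derives.hyp (hXY h)
  | thm h => exact Derives.thm h
  | mp _ _ ih1 ih2 => exact ih1.mp ih2

/-- Deduction theorem. -/
private lemma deduction {X : Set (Formula A)} {φ ψ : Formula A}
    (h : Derives (insert φ X) ψ) : Derives X (φ.impl ψ) := by
  induction h with
  | hyp h =>
    rcases h with h | h
    · subst h; exact Derives.thm (Prov.taut (taut_id _))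
    · exact (Derives.thm (Prov.taut (taut_K φ _))).mp (Derives.hyp h)
  | thm h => exact (Derives.thm (Prov.taut (taut_K φ _))).mp (Derives.thm h)
  | mp _ _ ih1 ih2 =>
    exact ((Derives.thm (Prov.taut (taut_S φ _ _))).mp ih1).mp ih2

/-- Compactness of derivability. -/
private lemma derives_compact {X : Set (Formula A)} {φ : Formula A}
    (h : Derives X φ) : ∃ Y ⊆ X, Y.Finite ∧ Derives Y φ := by
  induction h with
  | hyp h => exact ⟨{_}, Set.singleton_subset_iff.2 h, Set.finite_singleton _,
      Derives.hyp rfl⟩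
  | thm h => exact ⟨∅, Set.empty_subset _, Set.finite_empty, Derives.thm h⟩
  | mp _ _ ih1 ih2 =>
    obtain ⟨Y1, hY1, hf1, hd1⟩ := ih1
    obtain ⟨Y2, hY2, hf2, hd2⟩ := ih2
    exact ⟨Y1 ∪ Y2, Set.union_subset hY1 hY2, hf1.union hf2,
      (hd1.mono Set.subset_union_left).mp (hd2.mono Set.subset_union_right)⟩

private lemma not_consistent_insert {X : Set (Formula A)} {φ : Formula A}
    (h : ¬ Consistent (insert φ X)) : Derives X φ.neg := by
  simp only [Consistent, not_forall, not_not] at h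
  obtain ⟨χ, h1, h2⟩ := h
  exact ((Derives.thm (Prov.taut (taut_negI φ χ))).mp (deduction h1)).mp (deduction h2)

/-- A finite subset of the union of a nonempty chain lies in some member. -/
private lemma finite_subset_chain {c : Set (Set (Formula A))}
    (hchain : IsChain (· ⊆ ·) c) (hne : c.Nonempty) {Y : Set (Formula A)}
    (hfin : Y.Finite) (hsub : Y ⊆ ⋃₀ c) : ∃ Z ∈ c, Y ⊆ Z := by
  revert hsub
  refine Set.Finite.induction_on (motive := fun Y _ => Y ⊆ ⋃₀ c → ∃ Z ∈ c, Y ⊆ Z) Y hfin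
    (fun _ => ⟨hne.choose, hne.choose_spec, Set.empty_subset _⟩) ?_
  intro a s _ _ ih hsub
  obtain ⟨Z, hZ, hsZ⟩ := ih ((Set.subset_insert a s).trans hsub)
  obtain ⟨W, hW, haW⟩ := hsub (Set.mem_insert a s)
  rcases hchain.total hZ hW with h | h
  · exact ⟨W, hW, Set.insert_subset haW (hsZ.trans h)⟩
  · exact ⟨Z, hZ, Set.insert_subset (h haW) hsZ⟩

/-- Lindenbaum's lemma. -/
private lemma lindenbaum {X : Set (Formula A)} (hX : Consistent X) :
    ∃ M, X ⊆ M ∧ MCS M := by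
  obtain ⟨M, hXM, hMmem, hMmax⟩ :=
    zorn_subset_nonempty {Y : Set (Formula A) | Consistent Y}
      (fun c hc hchain hne => by
        refine ⟨⋃₀ c, ?_, fun s hs => Set.subset_sUnion_of_mem hs⟩
        intro χ ⟨h1, h2⟩
        obtain ⟨Y1, hY1, hf1, hd1⟩ := derives_compact h1
        obtain ⟨Y2, hY2, hf2, hd2⟩ := derives_compact h2
        obtain ⟨Z, hZc, hZ⟩ := finite_subset_chain hchain hne (hf1.union hf2)
          (Set.union_subset hY1 hY2)
        exact hc hZc χ ⟨hd1.mono ((Set.subset_union_left).trans hZ),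
          hd2.mono ((Set.subset_union_right).trans hZ)⟩) X hX
  refine ⟨M, hXM, hMmem, fun φ => ?_⟩
  by_contra hcon
  push_neg at hcon
  obtain ⟨h1, h2⟩ := hcon
  have key : ∀ ψ : Formula A, ψ ∉ M → Derives M ψ.neg := by
    intro ψ hψ
    have : ¬ Consistent (insert ψ M) := by
      intro hcons
      have := hMmax hcons (Set.subset_insert ψ M)
      exact hψ (this (Set.mem_insert ψ M))
    exact not_consistent_insert this
  exact hMmem φ.neg ⟨key φ h1, key φ.neg h2⟩

private lemma mcs_mem_of_derives {M : Set (Formula A)} {φ : Formula A}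
    (hM : MCS M) (h : Derives M φ) : φ ∈ M := by
  rcases hM.2 φ with hmem | hmem
  · exact hmem
  · exact absurd ⟨h, Derives.hyp hmem⟩ (hM.1 φ)

/-- If `φ` is derivable from `{ψ | Nψ ∈ ω₀}`, then `Nφ` is derivable from `ω₀`. -/
private lemma derives_N {ω₀ : Set (Formula A)} {φ : Formula A}
    (h : Derives {ψ | Formula.N ψ ∈ ω₀} φ) : Derives ω₀ (Formula.N φ) := by
  induction h with
  | hyp h => exact Derives.hyp h
  | thm h => exact Derives.thm (Prov.nec h)
  | mp _ _ ih1 ih2 => exact ((Derives.thm Prov.distr).mp ih1).mp ih2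

end Aux

/-- In the canonical game for a maximal consistent set `ω₀`, for
every play `(δ,ω) ∈ P` and every formula with `¬Nφ ∈ ω`, there is a play
`(δ',ω') ∈ P` with `¬φ ∈ ω'`. -/
theorem canonical_N_witness_exists {A : Type} [DecidableEq A]
    (ω₀ : Set (Formula A)) (hω₀ : MCS ω₀)
    (p : (A → (canonicalGame ω₀).Δ) × (canonicalGame ω₀).Ω)
    (hp : p ∈ (canonicalGame ω₀).P)
    (φ : Formula A) (hmem : (Formula.N φ).neg ∈ p.2.1) :
    ∃ q ∈ (canonicalGame ω₀).P, φ.neg ∈ q.2.1 := by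
  obtain ⟨ω, hωMCS, hωN⟩ := p.2
  -- Step 1: Nφ ∉ ω₀
  have hNφ : Formula.N φ ∉ ω₀ := by
    intro hmemN
    have hNN : Formula.N (Formula.N φ) ∈ ω₀ :=
      mcs_mem_of_derives hω₀ ((Derives.thm (prov_posIntro φ)).mp (Derives.hyp hmemN))
    have hNω : Formula.N φ ∈ p.2.1 := p.2.2.2 _ hNN
    exact p.2.2.1.1 (Formula.N φ) ⟨Derives.hyp hNω, Derives.hyp hmem⟩
  have hnNφ : (Formula.N φ).neg ∈ ω₀ := (hω₀.2 (Formula.N φ)).resolve_left hNφ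
  -- Step 2: {¬φ} ∪ {ψ | Nψ ∈ ω₀} is consistent
  have hXcons : Consistent (insert φ.neg {ψ : Formula A | Formula.N ψ ∈ ω₀}) := by
    by_contra hcon
    have h1 : Derives {ψ : Formula A | Formula.N ψ ∈ ω₀} φ.neg.neg :=
      not_consistent_insert hcon
    have h2 : Derives {ψ : Formula A | Formula.N ψ ∈ ω₀} φ :=
      (Derives.thm (Prov.taut (taut_dne φ))).mp h1
    exact hω₀.1 (Formula.N φ) ⟨derives_N h2, Derives.hyp hnNφ⟩
  -- Step 3: extend to an MCS
  obtain ⟨M, hXM, hMmcs⟩ := lindenbaum hXcons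
  refine ⟨⟨fun _ => (none : CanAct A), ⟨M, hMmcs, fun ψ hψ => hXM (Set.mem_insert_of_mem _ hψ)⟩⟩,
    ?_, hXM (Set.mem_insert _ _)⟩
  -- the constant-d₀ profile with outcome M is a play
  intro ψ C s h _ hall
  obtain ⟨a, ha⟩ := h.1
  exact absurd (hall a ha) (by simp)
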